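/- arXiv:2605.30532 — 3 statements merged into one kernel-verified Lean document; each statement's English description precedes it below -/
import Mathlib

section
/- Let Δ_1,…,Δ_d be reals with zero sum, M := max_i Δ_i, λ > 0, Z := ∑_k exp(-λ Δ_k), and A := {i : Δ_i ≥ M - 1}. Then ∑_{i ∈ A} exp(-λ Δ_i)/Z ≤ d · e^λ · exp(-λ · (d/(d-1)) · M). -/
theorem stmt_2 (d : ℕ) (hd : 2 ≤ d) (Δ : Fin d → ℝ)
    (hsum : ∑ i, Δ i = 0) (lam : ℝ) (hlam : 0 < lam)
    (hne : (Finset.univ : Finset (Fin d)).Nonempty)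
    (M : ℝ) (hM : M = Finset.univ.sup' hne Δ)
    (Z : ℝ) (hZ : Z = ∑ k, Real.exp (-lam * Δ k))
    (A : Finset (Fin d)) (hA : A = Finset.univ.filter (fun i => M - 1 ≤ Δ i)) :
    ∑ i ∈ A, Real.exp (-lam * Δ i) / Z ≤
      d * Real.exp lam * Real.exp (-lam * (d / (d - 1)) * M) := by
  have hd2 : (2:ℝ) ≤ (d:ℝ) := by exact_mod_cast hd
  have hd1 : (0:ℝ) < (d:ℝ) - 1 := by linarith
  obtain ⟨j₀, -, hj₀⟩ := Finset.exists_mem_eq_sup' hne Δ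
  have hle : ∀ i, Δ i ≤ M := fun i => hM ▸ Finset.le_sup' Δ (Finset.mem_univ i)
  have hj₀M : Δ j₀ = M := by rw [hM, hj₀]
  have hM0 : 0 ≤ M := by
    by_contra h
    push_neg at h
    have h1 : ∑ i, Δ i ≤ ∑ _i : Fin d, M := Finset.sum_le_sum fun i _ => hle i
    have h2 : ∑ _i : Fin d, M = (d:ℝ) * M := by simp [mul_comm]
    nlinarith [hsum]
  -- sum over erase j₀
  have hcard : ((Finset.univ.erase j₀).card : ℝ) = (d:ℝ) - 1 := by
    rw [Finset.card_erase_of_mem (Finset.mem_univ j₀), Finset.card_univ, Fintype.card_fin]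
    have : 1 ≤ d := by omega
    push_cast [this]
    ring
  have hsum' : ∑ i ∈ Finset.univ.erase j₀, Δ i = -M := by
    have := Finset.sum_erase_add Finset.univ Δ (Finset.mem_univ j₀)
    rw [hsum, hj₀M] at this
    linarith
  have hene : (Finset.univ.erase j₀).Nonempty := by
    rw [← Finset.card_pos]
    have : ((Finset.univ.erase j₀).card : ℝ) > 0 := by rw [hcard]; linarith
    exact_mod_cast this
  obtain ⟨j, -, hj⟩ : ∃ i ∈ Finset.univ.erase j₀, Δ i ≤ -M / ((d:ℝ) - 1) := by
    apply Finset.exists_le_of_sum_le hene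
    rw [hsum', Finset.sum_const, nsmul_eq_mul, hcard]
    have h : ((d:ℝ) - 1) * (-M / ((d:ℝ) - 1)) = -M := by field_simp
    linarith
  have hZpos : 0 < Z := by
    rw [hZ]; exact Finset.sum_pos (fun k _ => Real.exp_pos _) hne
  have hZge : Real.exp (lam * M / ((d:ℝ) - 1)) ≤ Z := by
    have h1 : Real.exp (lam * M / ((d:ℝ) - 1)) ≤ Real.exp (-lam * Δ j) := by
      apply Real.exp_le_exp.2
      have h := mul_le_mul_of_nonneg_left hj hlam.le
      rw [neg_div, mul_neg] at h
      rw [mul_div_assoc]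
      linarith
    calc Real.exp (lam * M / ((d:ℝ) - 1)) ≤ Real.exp (-lam * Δ j) := h1
      _ ≤ Z := by
          rw [hZ]
          exact Finset.single_le_sum (f := fun k => Real.exp (-lam * Δ k)) (fun k _ => (Real.exp_pos _).le) (Finset.mem_univ j)
  have hterm : ∀ i ∈ A, Real.exp (-lam * Δ i) / Z ≤
      Real.exp lam * Real.exp (-lam * M) / Z := by
    intro i hi
    rw [hA, Finset.mem_filter] at hi
    apply div_le_div_of_nonneg_right (c := Z) ?_ hZpos.le
    rw [← Real.exp_add]
    apply Real.exp_le_exp.2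
    nlinarith [hi.2]
  have hcardA : (A.card : ℝ) ≤ (d:ℝ) := by
    have : A.card ≤ d := by
      calc A.card ≤ (Finset.univ : Finset (Fin d)).card := Finset.card_le_card (by rw [hA]; exact Finset.filter_subset _ _)
        _ = d := by simp
    exact_mod_cast this
  calc ∑ i ∈ A, Real.exp (-lam * Δ i) / Z
      ≤ ∑ _i ∈ A, Real.exp lam * Real.exp (-lam * M) / Z := Finset.sum_le_sum hterm
    _ = (A.card : ℝ) * (Real.exp lam * Real.exp (-lam * M) / Z) := by
        rw [Finset.sum_const, nsmul_eq_mul]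
    _ ≤ (d:ℝ) * (Real.exp lam * Real.exp (-lam * M) / Z) := by
        apply mul_le_mul_of_nonneg_right hcardA
        positivity
    _ ≤ (d:ℝ) * (Real.exp lam * Real.exp (-lam * M) / Real.exp (lam * M / ((d:ℝ) - 1))) := by
        apply mul_le_mul_of_nonneg_left _ (by linarith)
        apply div_le_div_of_nonneg_left _ (Real.exp_pos _) hZge
        positivity
    _ = d * Real.exp lam * Real.exp (-lam * ((d:ℝ) / ((d:ℝ) - 1)) * M) := by
        rw [div_eq_mul_inv, ← Real.exp_neg, mul_assoc, ← Real.exp_add]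
        rw [mul_assoc]
        congr 2
        field_simp
        ring
end

section
/- Fix ρ ∈ (0,1), s ≥ 1, and let N(s) be the counting process of the birth process with waiting times E_m ~ Exp(ρ^m). Set i_*(s) := ⌊log_{1/ρ} s⌋ + 1 and C_1(ρ) := e^{1/ρ}. Then for every integer k ≥ 0, P(N(s) ≥ i_*(s) + k) ≤ C_1(ρ) ρ^{k(k+1)/2}. -/
open MeasureTheory Real ProbabilityTheory Set

lemma exp_aux_repr (l : ℝ) : expMeasure l = MeasureTheory.volume.withDensity
    (fun x => ((Real.toNNReal (if 0 ≤ x then l * Real.exp (-(l * x)) else 0)) : ENNReal)) := by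
  rw [expMeasure, gammaMeasure]
  congr 1
  funext x
  rw [show gammaPDF 1 l x = exponentialPDF l x from rfl, exponentialPDF_eq]
  rfl

lemma exp_mgf_aux {l c : ℝ} (hl : 0 < l) (hc : 0 < c) :
    Integrable (fun x => Real.exp (-c * x)) (expMeasure l) ∧
    ∫ x, Real.exp (-c * x) ∂(expMeasure l) = l / (l + c) := by
  set F : ℝ → NNReal := fun x => Real.toNNReal (if 0 ≤ x then l * Real.exp (-(l * x)) else 0) with hF
  have hFmeas : Measurable F := by
    apply Measurable.real_toNNReal
    exact Measurable.ite measurableSet_Ici ((measurable_id.const_mul l).neg.exp.const_mul l) measurable_const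
  have hlc : 0 < l + c := by linarith
  have hpt : ∀ x, (F x : ℝ) • Real.exp (-c * x)
      = Set.indicator (Set.Ici (0:ℝ)) (fun x => l * Real.exp (-((l+c) * x))) x := by
    intro x
    rw [hF]
    by_cases hx : 0 ≤ x
    · simp only [if_pos hx, smul_eq_mul, Set.indicator_of_mem (Set.mem_Ici.mpr hx)]
      rw [Real.coe_toNNReal _ (by positivity), mul_assoc, ← Real.exp_add]
      ring_nf
    · simp [if_neg hx, Set.indicator_of_notMem (fun h => hx (Set.mem_Ici.mp h))]
  have hIntOn : IntegrableOn (fun x => l * Real.exp (-((l+c) * x))) (Set.Ici (0:ℝ)) volume := by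
    rw [integrableOn_Ici_iff_integrableOn_Ioi]
    exact ((exp_neg_integrableOn_Ioi 0 hlc).const_mul l).congr
      (Filter.Eventually.of_forall fun x => by norm_num [neg_mul]; left; ring)
  have hIndInt : Integrable (Set.indicator (Set.Ici (0:ℝ)) (fun x => l * Real.exp (-((l+c) * x)))) volume :=
    hIntOn.integrable_indicator measurableSet_Ici
  have hsmulInt : Integrable (fun x => (F x : ℝ) • Real.exp (-c * x)) volume := by
    exact hIndInt.congr (Filter.Eventually.of_forall fun x => (hpt x).symm)
  constructor
  · rw [exp_aux_repr l]
    exact (integrable_withDensity_iff_integrable_smul hFmeas).mpr hsmulInt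
  · rw [exp_aux_repr l, integral_withDensity_eq_integral_smul hFmeas]
    calc ∫ x, (F x : ℝ) • Real.exp (-c * x) ∂volume
        = ∫ x, Set.indicator (Set.Ici (0:ℝ)) (fun x => l * Real.exp (-((l+c) * x))) x ∂volume :=
          integral_congr_ae (Filter.Eventually.of_forall hpt)
      _ = ∫ x in Set.Ici (0:ℝ), l * Real.exp (-((l+c) * x)) ∂volume := integral_indicator measurableSet_Ici
      _ = ∫ x in Set.Ioi (0:ℝ), l * Real.exp (-((l+c) * x)) ∂volume := integral_Ici_eq_integral_Ioi
      _ = l * ∫ x in Set.Ioi (0:ℝ), Real.exp (-((l+c) * x)) ∂volume := integral_const_mul l _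
      _ = l * ((l+c)⁻¹ * 1) := by
          have h := integral_comp_mul_left_Ioi (fun x => Real.exp (-x)) 0 hlc
          rw [mul_zero] at h
          rw [h, integral_exp_neg_Ioi_zero, smul_eq_mul]
      _ = l / (l + c) := by field_simp

theorem stmt_10 {Ω : Type*} [MeasurableSpace Ω] (μ : Measure Ω) [IsProbabilityMeasure μ]
    (ρ : ℝ) (hρ0 : 0 < ρ) (hρ1 : ρ < 1)
    (E : ℕ → Ω → ℝ)
    (hmeas : ∀ m, Measurable (E m))
    (hindep : ProbabilityTheory.iIndepFun E μ)
    (hcdf : ∀ m, ∀ t : ℝ, 0 ≤ t →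
      μ {ω | E m ω ≤ t} = ENNReal.ofReal (1 - Real.exp (-(ρ ^ m) * t)))
    (S : ℕ → Ω → ℝ) (hS : ∀ r ω, S r ω = ∑ m ∈ Finset.range r, E m ω)
    (s : ℝ) (hs : 1 ≤ s)
    (istar : ℕ) (histar : istar = ⌊Real.log s / Real.log (1 / ρ)⌋₊ + 1)
    (k : ℕ) :
    μ {ω | S (istar + k) ω ≤ s} ≤
      ENNReal.ofReal (Real.exp (1 / ρ) * ρ ^ (k * (k + 1) / 2)) := by
  have hist1 : 1 ≤ istar := by rw [histar]; omega
  set θ : ℝ := ρ ^ (istar - 1) with hθdef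
  have hθ : 0 < θ := pow_pos hρ0 _
  set r := istar + k with hr
  -- the law of each E m is exponential
  have hlaw : ∀ m, μ.map (E m) = expMeasure (ρ ^ m) := by
    intro m
    have hpm : 0 < ρ ^ m := pow_pos hρ0 m
    haveI := isProbabilityMeasure_expMeasure hpm
    haveI : IsProbabilityMeasure (μ.map (E m)) :=
      Measure.isProbabilityMeasure_map (hmeas m).aemeasurable
    refine MeasureTheory.Measure.ext_of_Iic _ _ (fun a => ?_)
    rw [Measure.map_apply (hmeas m) measurableSet_Iic]
    have hRHS : expMeasure (ρ ^ m) (Iic a)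
        = ENNReal.ofReal (if 0 ≤ a then 1 - Real.exp (-(ρ ^ m * a)) else 0) := by
      rw [← ofReal_cdf, cdf_expMeasure_eq hpm]
    by_cases ha : 0 ≤ a
    · rw [show E m ⁻¹' Iic a = {ω | E m ω ≤ a} from rfl, hcdf m a ha, hRHS, if_pos ha, neg_mul]
    · have h0 : μ {ω | E m ω ≤ a} = 0 := by
        refine le_antisymm ?_ (zero_le (a := μ {ω | E m ω ≤ a}))
        calc μ {ω | E m ω ≤ a} ≤ μ {ω | E m ω ≤ 0} :=
              measure_mono (fun ω h => le_trans h (le_of_lt (lt_of_not_ge ha)))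
          _ = 0 := by simpa using hcdf m 0 le_rfl
      rw [show E m ⁻¹' Iic a = {ω | E m ω ≤ a} from rfl, h0, hRHS, if_neg ha, ENNReal.ofReal_zero]
  -- integrability and mgf of each coordinate
  have hgm : Measurable fun x : ℝ => Real.exp (-θ * x) :=
    (measurable_id.const_mul (-θ)).exp
  have hint : ∀ m, Integrable (fun ω => Real.exp (-θ * E m ω)) μ := by
    intro m
    have h := (exp_mgf_aux (pow_pos hρ0 m) hθ).1
    rw [← hlaw m] at h
    exact (integrable_map_measure hgm.aestronglyMeasurable (hmeas m).aemeasurable).mp h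
  have hmgf : ∀ m, ProbabilityTheory.mgf (E m) μ (-θ) = ρ ^ m / (ρ ^ m + θ) := by
    intro m
    have h1 : ∫ x, Real.exp (-θ * x) ∂(μ.map (E m)) = ∫ ω, Real.exp (-θ * E m ω) ∂μ :=
      integral_map (hmeas m).aemeasurable hgm.aestronglyMeasurable
    rw [ProbabilityTheory.mgf, ← h1, hlaw m]
    exact (exp_mgf_aux (pow_pos hρ0 m) hθ).2
  -- Chernoff bound
  have hsum_int : Integrable (fun ω => Real.exp (-θ * (∑ m ∈ Finset.range r, E m) ω)) μ :=
    hindep.integrable_exp_mul_sum hmeas (fun m _ => hint m)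
  have hchern := ProbabilityTheory.measure_le_le_exp_mul_mgf
    (X := ∑ m ∈ Finset.range r, E m) (μ := μ) s (neg_nonpos.mpr hθ.le) hsum_int
  rw [hindep.mgf_sum hmeas (Finset.range r)] at hchern
  -- bound the product
  have hterm : ∀ m : ℕ, ProbabilityTheory.mgf (E m) μ (-θ) = ρ ^ m / (ρ ^ m + θ) := hmgf
  have hprod_le : ∏ m ∈ Finset.range r, ProbabilityTheory.mgf (E m) μ (-θ)
      ≤ ρ ^ (k * (k + 1) / 2) := by
    have hrw : ∏ m ∈ Finset.range r, ProbabilityTheory.mgf (E m) μ (-θ)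
        = (∏ m ∈ Finset.range istar, ρ ^ m / (ρ ^ m + θ))
          * ∏ j ∈ Finset.range k, ρ ^ (istar + j) / (ρ ^ (istar + j) + θ) := by
      rw [Finset.prod_congr rfl (fun m _ => hterm m), hr, Finset.prod_range_add]
    have hA : (∏ m ∈ Finset.range istar, ρ ^ m / (ρ ^ m + θ)) ≤ 1 := by
      refine Finset.prod_le_one (fun i _ => by positivity) (fun i _ => ?_)
      rw [div_le_one (by positivity)]
      exact le_add_of_nonneg_right hθ.le
    have hB : (∏ j ∈ Finset.range k, ρ ^ (istar + j) / (ρ ^ (istar + j) + θ))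
        ≤ ρ ^ (k * (k + 1) / 2) := by
      have hBB : (∏ j ∈ Finset.range k, ρ ^ (istar + j) / (ρ ^ (istar + j) + θ))
          ≤ ∏ j ∈ Finset.range k, ρ ^ (j + 1) := by
        refine Finset.prod_le_prod (fun j _ => by positivity) (fun j _ => ?_)
        have h1 : ρ ^ (istar + j) / (ρ ^ (istar + j) + θ) ≤ ρ ^ (istar + j) / θ := by
          gcongr
          exact le_add_of_nonneg_left (by positivity)
        have h2 : ρ ^ (istar + j) / θ = ρ ^ (j + 1) := by
          rw [show istar + j = (istar - 1) + (j + 1) by omega, pow_add, hθdef, mul_comm,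
            mul_div_assoc, div_self (pow_ne_zero _ hρ0.ne'), mul_one]
        exact h1.trans_eq h2
      have hsum : ∑ j ∈ Finset.range k, (j + 1) = k * (k + 1) / 2 := by
        have h := Finset.sum_range_id_mul_two (k + 1)
        have h2 : ∑ i ∈ Finset.range (k + 1), i = (∑ j ∈ Finset.range k, (j + 1)) + 0 :=
          Finset.sum_range_succ' id k
        have h3 : (k + 1) * (k + 1 - 1) = k * (k + 1) := by
          simp [Nat.add_sub_cancel, Nat.mul_comm]
        omega
      refine hBB.trans (le_of_eq ?_)
      rw [Finset.prod_pow_eq_pow_sum, hsum]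
    rw [hrw]
    calc (∏ m ∈ Finset.range istar, ρ ^ m / (ρ ^ m + θ))
          * ∏ j ∈ Finset.range k, ρ ^ (istar + j) / (ρ ^ (istar + j) + θ)
        ≤ 1 * ρ ^ (k * (k + 1) / 2) := by
          refine mul_le_mul hA hB (Finset.prod_nonneg fun i _ => by positivity) zero_le_one
      _ = ρ ^ (k * (k + 1) / 2) := one_mul _
  -- bound the exponential factor
  have hexp : Real.exp (- -θ * s) ≤ Real.exp (1 / ρ) := by
    rw [neg_neg]
    apply Real.exp_le_exp.mpr
    have hlog1ρ : 0 < Real.log (1 / ρ) := Real.log_pos (one_lt_one_div hρ0 hρ1)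
    have hx : Real.log s / Real.log (1 / ρ) < istar := by
      rw [histar]; push_cast; exact Nat.lt_floor_add_one _
    have hlt : Real.log s < istar * Real.log (1 / ρ) := by
      rw [div_lt_iff₀ hlog1ρ] at hx; linarith
    have hs0 : (0 : ℝ) < s := lt_of_lt_of_le one_pos hs
    have hppos : (0 : ℝ) < (1 / ρ) ^ istar := by positivity
    have hspow : s < (1 / ρ) ^ istar := by
      have hlp : Real.log ((1/ρ) ^ istar) = istar * Real.log (1/ρ) := by
        rw [Real.log_pow]
      rw [← hlp] at hlt
      exact (Real.log_lt_log_iff hs0 hppos).mp hlt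
    have h2 : θ * (1 / ρ) ^ istar = 1 / ρ := by
      obtain ⟨n, hn⟩ : ∃ n, istar = n + 1 := ⟨istar - 1, by omega⟩
      rw [hθdef, hn]
      simp only [Nat.add_sub_cancel]
      rw [one_div, inv_pow, pow_succ, mul_inv, ← mul_assoc,
        mul_inv_cancel₀ (pow_ne_zero _ hρ0.ne'), one_mul]
    nlinarith [hθ, hspow, h2]
  have hsetrw : {ω | S r ω ≤ s} = {ω | (∑ m ∈ Finset.range r, E m) ω ≤ s} := by
    ext ω; simp [hS, Finset.sum_apply]
  calc μ {ω | S r ω ≤ s}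
      = ENNReal.ofReal ((μ {ω | (∑ m ∈ Finset.range r, E m) ω ≤ s}).toReal) := by
        rw [← hsetrw]; exact (ENNReal.ofReal_toReal (measure_ne_top μ _)).symm
    _ ≤ ENNReal.ofReal (Real.exp (1 / ρ) * ρ ^ (k * (k + 1) / 2)) :=
        ENNReal.ofReal_le_ofReal (hchern.trans (mul_le_mul hexp hprod_le
          (Finset.prod_nonneg fun i _ => ProbabilityTheory.mgf_nonneg) (Real.exp_pos _).le))
end

section
/- With the notation of the birth process (ρ ∈ (0,1), E_m ~ Exp(ρ^m) independent, N(s) the counting process, i_*(s) := ⌊log_{1/ρ}s⌋ + 1, C_2(ρ) := ∏_{m=0}^∞ (1 - ρ^m/2)^{-1}): for every integer k with 1 ≤ k ≤ i_*(s) - 1, P(N(s) ≤ i_*(s) - k) ≤ C_2(ρ) exp(-ρ^{-k+1}/2). -/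
open MeasureTheory Real Set ProbabilityTheory
open scoped ENNReal NNReal

lemma aux_pdf_mul {l θ : ℝ} (hl : 0 < l) (hθl : θ < l) :
    (fun x : ℝ => exponentialPDFReal l x * Real.exp (θ * x))
      = Set.indicator (Ici 0) (fun x => l * Real.exp (-(l - θ) * x)) := by
  funext x
  rcases le_or_gt 0 x with hx | hx
  · rw [Set.indicator_of_mem (mem_Ici.mpr hx)]
    simp only [exponentialPDFReal, gammaPDFReal, if_pos hx, Real.rpow_one, Real.Gamma_one,
      div_one, sub_self, Real.rpow_zero, mul_one]
    rw [mul_assoc, ← Real.exp_add]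
    ring_nf
  · rw [Set.indicator_of_notMem (by simpa using hx)]
    simp only [exponentialPDFReal, gammaPDFReal, if_neg (not_le.mpr hx), zero_mul]

lemma aux_int_Ici {l θ : ℝ} (hl : 0 < l) (hθl : θ < l) :
    IntegrableOn (fun x : ℝ => l * Real.exp (-(l - θ) * x)) (Ici 0) := by
  rw [integrableOn_Ici_iff_integrableOn_Ioi]
  exact (exp_neg_integrableOn_Ioi 0 (sub_pos.mpr hθl)).const_mul l

lemma aux_integral_Ici {l θ : ℝ} (hl : 0 < l) (hθl : θ < l) :
    ∫ x in Ici (0:ℝ), l * Real.exp (-(l - θ) * x) = l * (l - θ)⁻¹ := by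
  rw [MeasureTheory.integral_Ici_eq_integral_Ioi, MeasureTheory.integral_const_mul]
  congr 1
  have hc : 0 < l - θ := sub_pos.mpr hθl
  have := integral_comp_mul_left_Ioi (fun y : ℝ => Real.exp (-y)) 0 hc
  simp only [mul_zero, smul_eq_mul] at this
  calc ∫ x in Ioi (0:ℝ), Real.exp (-(l - θ) * x)
      = ∫ x in Ioi (0:ℝ), Real.exp (-((l - θ) * x)) := by congr 1; funext x; ring_nf
    _ = (l - θ)⁻¹ * ∫ y in Ioi (0:ℝ), Real.exp (-y) := this
    _ = (l - θ)⁻¹ := by rw [integral_exp_neg_Ioi_zero, mul_one]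

lemma aux_smul_eq {l θ : ℝ} (hl : 0 < l) :
    (fun x : ℝ => (Real.toNNReal (exponentialPDFReal l x)) • Real.exp (θ * x))
      = fun x => exponentialPDFReal l x * Real.exp (θ * x) := by
  funext x
  rw [NNReal.smul_def, smul_eq_mul, Real.coe_toNNReal _ (exponentialPDFReal_nonneg hl x)]

lemma aux_dens (l : ℝ) :
    expMeasure l
      = volume.withDensity fun x => ((Real.toNNReal (exponentialPDFReal l x) : ℝ≥0) : ℝ≥0∞) :=
  rfl

lemma aux_exp_integrable {l θ : ℝ} (hl : 0 < l) (hθl : θ < l) :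
    Integrable (fun x : ℝ => Real.exp (θ * x)) (expMeasure l) := by
  rw [aux_dens l,
    integrable_withDensity_iff_integrable_smul (measurable_exponentialPDFReal l).real_toNNReal,
    aux_smul_eq hl, aux_pdf_mul hl hθl]
  exact (aux_int_Ici hl hθl).integrable_indicator measurableSet_Ici

lemma aux_exp_integral {l θ : ℝ} (hl : 0 < l) (hθl : θ < l) :
    ∫ x, Real.exp (θ * x) ∂(expMeasure l) = l * (l - θ)⁻¹ := by
  rw [aux_dens l,
    integral_withDensity_eq_integral_smul (measurable_exponentialPDFReal l).real_toNNReal,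
    aux_smul_eq hl, aux_pdf_mul hl hθl, integral_indicator measurableSet_Ici,
    aux_integral_Ici hl hθl]

lemma aux_map_eq {Ω : Type*} [MeasurableSpace Ω] (μ : Measure Ω) [IsProbabilityMeasure μ]
    {l : ℝ} (hl : 0 < l) {X : Ω → ℝ} (hX : Measurable X)
    (hcdf : ∀ t : ℝ, 0 ≤ t → μ {ω | X ω ≤ t} = ENNReal.ofReal (1 - Real.exp (-l * t))) :
    Measure.map X μ = expMeasure l := by
  have h1 : IsProbabilityMeasure (Measure.map X μ) :=
    Measure.isProbabilityMeasure_map hX.aemeasurable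
  refine Measure.ext_of_Iic _ _ fun t => ?_
  rw [Measure.map_apply hX measurableSet_Iic]
  have hexp : expMeasure l (Iic t)
      = ENNReal.ofReal (if 0 ≤ t then 1 - Real.exp (-(l * t)) else 0) := by
    rw [show expMeasure l = volume.withDensity (exponentialPDF l) from rfl,
      withDensity_apply _ measurableSet_Iic]
    exact lintegral_exponentialPDF_eq_antiDeriv hl t
  rcases le_or_gt 0 t with ht | ht
  · rw [hexp, if_pos ht, show X ⁻¹' Iic t = {ω | X ω ≤ t} from rfl, hcdf t ht, neg_mul]
  · rw [hexp, if_neg (not_le.mpr ht), ENNReal.ofReal_zero]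
    have h0 : μ {ω | X ω ≤ 0} = 0 := by
      rw [hcdf 0 le_rfl]; simp
    refine le_antisymm (le_trans (measure_mono ?_) h0.le) (zero_le)
    intro ω hω
    exact le_trans hω ht.le

lemma aux_key {Ω : Type*} [MeasurableSpace Ω] (μ : Measure Ω) [IsProbabilityMeasure μ]
    {l θ : ℝ} (hl : 0 < l) (hθl : θ < l) {X : Ω → ℝ} (hX : Measurable X)
    (hcdf : ∀ t : ℝ, 0 ≤ t → μ {ω | X ω ≤ t} = ENNReal.ofReal (1 - Real.exp (-l * t))) :
    Integrable (fun ω => Real.exp (θ * X ω)) μ ∧ mgf X μ θ = l * (l - θ)⁻¹ := by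
  have hmap : Measure.map X μ = expMeasure l := aux_map_eq μ hl hX hcdf
  have hg : AEStronglyMeasurable (fun x : ℝ => Real.exp (θ * x)) (Measure.map X μ) :=
    (Real.continuous_exp.comp (continuous_const.mul continuous_id)).aestronglyMeasurable
  constructor
  · have := (integrable_map_measure hg hX.aemeasurable).mp
      (by rw [hmap]; exact aux_exp_integrable hl hθl)
    exact this
  · rw [mgf, ← integral_map hX.aemeasurable hg, hmap, aux_exp_integral hl hθl]

lemma aux_one_le {ρ : ℝ} (hρ0 : 0 < ρ) (hρ1 : ρ < 1) (m : ℕ) :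
    1 ≤ (1 - ρ ^ m / 2)⁻¹ := by
  have h1 : ρ ^ m ≤ 1 := pow_le_one₀ hρ0.le hρ1.le
  have h2 : 0 < 1 - ρ ^ m / 2 := by nlinarith
  have hp : 0 < ρ ^ m := pow_pos hρ0 m
  rw [one_le_inv_iff₀]
  constructor <;> nlinarith

lemma aux_mult {ρ : ℝ} (hρ0 : 0 < ρ) (hρ1 : ρ < 1) :
    Multipliable (fun m : ℕ => (1 - ρ ^ m / 2)⁻¹) := by
  have hpos : ∀ (_ : Unit) (m : ℕ), 0 < (1 - ρ ^ m / 2)⁻¹ := by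
    intro _ m
    have h1 : ρ ^ m ≤ 1 := pow_le_one₀ hρ0.le hρ1.le
    have h2 : 0 < 1 - ρ ^ m / 2 := by nlinarith
    positivity
  have hsum : ∀ _ : Unit, Summable fun m : ℕ => Real.log ((1 - ρ ^ m / 2)⁻¹) := by
    intro _
    apply Summable.of_nonneg_of_le (f := fun m : ℕ => ρ ^ m)
    · intro m
      apply Real.log_nonneg (aux_one_le hρ0 hρ1 m)
    · intro m
      have h1 : ρ ^ m ≤ 1 := pow_le_one₀ hρ0.le hρ1.le
      have hp : 0 < ρ ^ m := pow_pos hρ0 m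
      have h2 : 0 < 1 - ρ ^ m / 2 := by nlinarith
      have hinv : (1 - ρ ^ m / 2)⁻¹ ≤ 1 + ρ ^ m := by
        rw [inv_le_iff_one_le_mul₀ h2]
        nlinarith
      calc Real.log ((1 - ρ ^ m / 2)⁻¹) ≤ (1 - ρ ^ m / 2)⁻¹ - 1 :=
            Real.log_le_sub_one_of_pos (by positivity)
        _ ≤ ρ ^ m := by linarith
    · exact summable_geometric_of_lt_one hρ0.le hρ1
  exact Real.multipliable_of_summable_log (hpos ()) (hsum ())

lemma aux_prod_le_tprod {f : ℕ → ℝ} (h1 : ∀ i, 1 ≤ f i) (hf : Multipliable f) (s : Finset ℕ) :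
    ∏ i ∈ s, f i ≤ ∏' i, f i := by
  refine ge_of_tendsto hf.hasProd (Filter.eventually_atTop.2 ⟨s, fun t hst => ?_⟩)
  rw [← Finset.prod_sdiff hst]
  have hs : (0:ℝ) ≤ ∏ i ∈ s, f i :=
    Finset.prod_nonneg fun i _ => le_trans zero_le_one (h1 i)
  have hd : (1:ℝ) ≤ ∏ i ∈ t \ s, f i := by
    rw [← Finset.prod_const_one (s := t \ s)]
    exact Finset.prod_le_prod (fun i _ => zero_le_one) fun i _ => h1 i
  nlinarith

lemma aux_pow_s {ρ s : ℝ} (hρ0 : 0 < ρ) (hρ1 : ρ < 1) (hs : 1 ≤ s)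
    {istar k : ℕ} (histar : istar = ⌊Real.log s / Real.log (1 / ρ)⌋₊ + 1)
    (hk1 : 1 ≤ k) (hki : k ≤ istar - 1) :
    ρ ^ ((1:ℝ) - k) ≤ ρ ^ (istar - k) * s := by
  have hi1 : 1 ≤ istar := by omega
  have hkle : k ≤ istar := le_trans hki (Nat.sub_le _ _)
  have hlog : 0 < Real.log (1 / ρ) := Real.log_pos (by rw [lt_div_iff₀ hρ0]; linarith)
  have hfl : ((istar - 1 : ℕ) : ℝ) ≤ Real.log s / Real.log (1 / ρ) := by
    have : (istar - 1 : ℕ) = ⌊Real.log s / Real.log (1 / ρ)⌋₊ := by omega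
    rw [this]
    exact Nat.floor_le (div_nonneg (Real.log_nonneg hs) hlog.le)
  have h2 : ((istar - 1 : ℕ) : ℝ) * Real.log (1 / ρ) ≤ Real.log s :=
    (le_div_iff₀ hlog).mp hfl
  have hlinv : Real.log (1 / ρ) = -Real.log ρ := by rw [one_div, Real.log_inv]
  have hpowpos : (0:ℝ) < ρ ^ (istar - 1 : ℕ) := pow_pos hρ0 _
  have hge1 : 1 ≤ ρ ^ (istar - 1 : ℕ) * s := by
    rw [← Real.log_nonneg_iff (by positivity)]
    rw [Real.log_mul hpowpos.ne' (by linarith), Real.log_pow]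
    rw [hlinv] at h2
    linarith
  have e1 : ρ ^ (istar - k) = ρ ^ (((istar:ℝ) - k)) := by
    rw [← Real.rpow_natCast ρ (istar - k), Nat.cast_sub hkle]
  have e2 : ρ ^ (istar - 1 : ℕ) = ρ ^ (((istar:ℝ) - 1)) := by
    rw [← Real.rpow_natCast ρ (istar - 1), Nat.cast_sub hi1, Nat.cast_one]
  have e3 : ρ ^ (((istar:ℝ) - k)) = ρ ^ ((1:ℝ) - k) * ρ ^ (((istar:ℝ) - 1)) := by
    rw [← Real.rpow_add hρ0]; ring_nf
  rw [e1, e3, mul_assoc, ← e2]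
  exact le_mul_of_one_le_right (Real.rpow_pos_of_pos hρ0 _).le hge1

theorem stmt_11 {Ω : Type*} [MeasurableSpace Ω] (μ : Measure Ω) [IsProbabilityMeasure μ]
    (ρ : ℝ) (hρ0 : 0 < ρ) (hρ1 : ρ < 1)
    (E : ℕ → Ω → ℝ)
    (hmeas : ∀ m, Measurable (E m))
    (hindep : ProbabilityTheory.iIndepFun E μ)
    (hcdf : ∀ m, ∀ t : ℝ, 0 ≤ t →
      μ {ω | E m ω ≤ t} = ENNReal.ofReal (1 - Real.exp (-(ρ ^ m) * t)))
    (S : ℕ → Ω → ℝ) (hS : ∀ r ω, S r ω = ∑ m ∈ Finset.range r, E m ω)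
    (s : ℝ) (hs : 1 ≤ s)
    (istar : ℕ) (histar : istar = ⌊Real.log s / Real.log (1 / ρ)⌋₊ + 1)
    (C₂ : ℝ) (hC₂ : C₂ = ∏' m : ℕ, (1 - ρ ^ m / 2)⁻¹)
    (k : ℕ) (hk1 : 1 ≤ k) (hk2 : k ≤ istar - 1) :
    μ {ω | s < S (istar - k + 1) ω} ≤
      ENNReal.ofReal (C₂ * Real.exp (-(ρ ^ (1 - (k : ℝ))) / 2)) := by
  classical
  set r : ℕ := istar - k + 1 with hr
  set θ : ℝ := ρ ^ (istar - k) / 2 with hθ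
  have hθpos : 0 < θ := by positivity
  have hθlt : ∀ m, m < r → θ < ρ ^ m := by
    intro m hm
    have hmle : m ≤ istar - k := by omega
    have h1 : ρ ^ (istar - k) ≤ ρ ^ m := pow_le_pow_of_le_one hρ0.le hρ1.le hmle
    have h2 : (0:ℝ) < ρ ^ (istar - k) := pow_pos hρ0 _
    rw [hθ]; linarith
  have hkey : ∀ m, m < r → Integrable (fun ω => Real.exp (θ * E m ω)) μ ∧
      mgf (E m) μ θ = ρ ^ m * (ρ ^ m - θ)⁻¹ :=
    fun m hm => aux_key μ (pow_pos hρ0 m) (hθlt m hm) (hmeas m) (hcdf m)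
  have hSr : S r = ∑ m ∈ Finset.range r, E m := by
    funext ω; rw [hS]; simp
  have hintS : Integrable (fun ω => Real.exp (θ * S r ω)) μ := by
    rw [hSr]
    exact hindep.integrable_exp_mul_sum hmeas fun i hi => (hkey i (Finset.mem_range.mp hi)).1
  have hmgf : mgf (S r) μ θ = ∏ m ∈ Finset.range r, (1 - ρ ^ (istar - k - m) / 2)⁻¹ := by
    rw [hSr, hindep.mgf_sum hmeas]
    refine Finset.prod_congr rfl fun m hm => ?_
    rw [(hkey m (Finset.mem_range.mp hm)).2]
    have hsplit : ρ ^ (istar - k) = ρ ^ m * ρ ^ (istar - k - m) := by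
      rw [← pow_add]; congr 1
      have := Finset.mem_range.mp hm
      omega
    have hpm : (0:ℝ) < ρ ^ m := pow_pos hρ0 m
    rw [hθ, hsplit,
      show ρ ^ m - ρ ^ m * ρ ^ (istar - k - m) / 2
          = ρ ^ m * (1 - ρ ^ (istar - k - m) / 2) from by ring,
      mul_inv, ← mul_assoc, mul_inv_cancel₀ hpm.ne', one_mul]
  have hprodle : ∏ m ∈ Finset.range r, (1 - ρ ^ (istar - k - m) / 2)⁻¹ ≤ C₂ := by
    have hre : ∏ m ∈ Finset.range r, (1 - ρ ^ (istar - k - m) / 2)⁻¹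
        = ∏ m ∈ Finset.range r, (1 - ρ ^ m / 2)⁻¹ := by
      rw [← Finset.prod_range_reflect (fun m => (1 - ρ ^ m / 2)⁻¹) r]
      refine Finset.prod_congr rfl fun m _ => ?_
      have : istar - k - m = r - 1 - m := by omega
      rw [this]
    rw [hre, hC₂]
    exact aux_prod_le_tprod (aux_one_le hρ0 hρ1) (aux_mult hρ0 hρ1) _
  have hP0 : 0 ≤ ∏ m ∈ Finset.range r, (1 - ρ ^ (istar - k - m) / 2)⁻¹ :=
    Finset.prod_nonneg fun m _ => le_trans zero_le_one (aux_one_le hρ0 hρ1 _)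
  have hexple : Real.exp (-θ * s) ≤ Real.exp (-(ρ ^ ((1:ℝ) - k)) / 2) := by
    rw [Real.exp_le_exp]
    have h := aux_pow_s hρ0 hρ1 hs histar hk1 hk2
    rw [hθ]
    linarith
  have hcher := measure_ge_le_exp_mul_mgf (μ := μ) (X := S r) s hθpos.le hintS
  have hfin : μ {ω | s ≤ S r ω} ≠ ⊤ := measure_ne_top μ _
  calc μ {ω | s < S r ω} ≤ μ {ω | s ≤ S r ω} := measure_mono fun ω hω => le_of_lt (show s < S r ω from hω)
    _ = ENNReal.ofReal ((μ {ω | s ≤ S r ω}).toReal) := (ENNReal.ofReal_toReal hfin).symm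
    _ ≤ ENNReal.ofReal (C₂ * Real.exp (-(ρ ^ (1 - (k : ℝ))) / 2)) := by
        apply ENNReal.ofReal_le_ofReal
        refine le_trans hcher ?_
        rw [hmgf]
        calc Real.exp (-θ * s) * ∏ m ∈ Finset.range r, (1 - ρ ^ (istar - k - m) / 2)⁻¹
            ≤ Real.exp (-(ρ ^ ((1:ℝ) - k)) / 2) * C₂ :=
              mul_le_mul hexple hprodle hP0 (Real.exp_nonneg _)
          _ = C₂ * Real.exp (-(ρ ^ (1 - (k : ℝ))) / 2) := by rw [mul_comm]
end
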